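/- Let A, B be real N×N matrices and let K be a C¹ Matrix N N ℝ-valued function on the triangle {(x,t) : 0 ≤ t ≤ x ≤ π} such that K(x,0)·Aᵀ + (∂K/∂t)(x,0)·Bᵀ = 0 for all x ∈ [0,π] and K(0,0) is symmetric; set à := A − B·K(0,0). If f : [0,π] → ℝ^N is C¹ with B·f'(0) + ÷f(0) = 0, then the function g(t) := f(t) + ∫_t^π K(x,t)ᵀ·f(x) dx satisfies B·g'(0) + A·g(0) = 0. -/

import Mathlib

open Matrix MeasureTheory Set Filter

attribute [local instance] Matrix.normedAddCommGroup Matrix.normedSpace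

section aux
variable {N : ℕ}

/-- The continuous linear map `M ↦ Mᵀ *ᵥ v`. -/
noncomputable def tmv (v : Fin N → ℝ) : Matrix (Fin N) (Fin N) ℝ →L[ℝ] (Fin N → ℝ) :=
  LinearMap.toContinuousLinearMap
    { toFun := fun M => Mᵀ *ᵥ v
      map_add' := by intro M M'; simp [Matrix.transpose_add, Matrix.add_mulVec]
      map_smul' := by intro c M; simp [Matrix.transpose_smul, Matrix.smul_mulVec]
    }

@[simp] lemma tmv_apply (v : Fin N → ℝ) (M : Matrix (Fin N) (Fin N) ℝ) :
    tmv v M = Mᵀ *ᵥ v := rfl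

/-- The continuous linear map `v ↦ M *ᵥ v`. -/
noncomputable def mvc (M : Matrix (Fin N) (Fin N) ℝ) : (Fin N → ℝ) →L[ℝ] (Fin N → ℝ) :=
  LinearMap.toContinuousLinearMap M.mulVecLin

@[simp] lemma mvc_apply (M : Matrix (Fin N) (Fin N) ℝ) (v : Fin N → ℝ) :
    mvc M v = M *ᵥ v := rfl

end aux

theorem adjoint_transform_boundary
    (N : ℕ) (hN : 1 ≤ N)
    (A B : Matrix (Fin N) (Fin N) ℝ)
    (K : ℝ → ℝ → Matrix (Fin N) (Fin N) ℝ)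
    (hKC : ContDiff ℝ 1 (Function.uncurry K))
    (hKbc : ∀ x ∈ Set.Icc (0:ℝ) Real.pi,
      K x 0 * Aᵀ + deriv (fun t => K x t) 0 * Bᵀ = 0)
    (hKsymm : (K 0 0)ᵀ = K 0 0)
    (A' : Matrix (Fin N) (Fin N) ℝ) (hA' : A' = A - B * K 0 0)
    (f : ℝ → Fin N → ℝ) (hfC : ContDiff ℝ 1 f)
    (hfbc : B *ᵥ deriv f 0 + A' *ᵥ f 0 = 0)
    (g : ℝ → Fin N → ℝ)
    (hg : ∀ t : ℝ, g t = f t + ∫ x in t..Real.pi, (K x t)ᵀ *ᵥ f x) :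
    B *ᵥ deriv g 0 + A *ᵥ g 0 = 0 := by
  -- notation
  set F : ℝ → ℝ → Fin N → ℝ := fun x t => (K x t)ᵀ *ᵥ f x with hF
  set Kt : ℝ → ℝ → Matrix (Fin N) (Fin N) ℝ :=
    fun x t => fderiv ℝ (Function.uncurry K) (x, t) (0, 1) with hKt
  set Ft : ℝ → ℝ → Fin N → ℝ := fun x t => (Kt x t)ᵀ *ᵥ f x with hFt
  have hKcont : Continuous (Function.uncurry K) := hKC.continuous
  have hfcont : Continuous f := hfC.continuous
  -- derivative of K x in t
  have hKder : ∀ x t : ℝ, HasDerivAt (fun s => K x s) (Kt x t) t := by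
    intro x t
    have h1 : HasDerivAt (fun s : ℝ => (x, s)) ((0 : ℝ), (1 : ℝ)) t :=
      (hasDerivAt_const t x).prodMk (hasDerivAt_id t)
    have h2 : HasFDerivAt (Function.uncurry K) (fderiv ℝ (Function.uncurry K) (x, t)) (x, t) :=
      (hKC.differentiable one_ne_zero (x, t)).hasFDerivAt
    exact h2.comp_hasDerivAt t h1
  have hKtcont : Continuous (fun p : ℝ × ℝ => Kt p.1 p.2) := by
    exact (hKC.continuous_fderiv one_ne_zero).clm_apply (continuous_const : Continuous fun _ : ℝ × ℝ => ((0:ℝ),(1:ℝ)))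
  -- continuity of F, Ft
  have hFcont : Continuous (fun p : ℝ × ℝ => F p.1 p.2) := by
    exact (hKcont.matrix_transpose.matrix_mulVec (hfcont.comp continuous_fst))
  have hFtcont : Continuous (fun p : ℝ × ℝ => Ft p.1 p.2) := by
    exact (hKtcont.matrix_transpose.matrix_mulVec (hfcont.comp continuous_fst))
  have hFx : ∀ t : ℝ, Continuous (fun x => F x t) := fun t =>
    hFcont.comp (continuous_id.prodMk continuous_const)
  have hFtx : ∀ t : ℝ, Continuous (fun x => Ft x t) := fun t =>
    hFtcont.comp (continuous_id.prodMk continuous_const)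
  have hFint : ∀ (t a b : ℝ), IntervalIntegrable (fun x => F x t) volume a b :=
    fun t a b => (hFx t).intervalIntegrable a b
  have hFtint : ∀ (t a b : ℝ), IntervalIntegrable (fun x => Ft x t) volume a b :=
    fun t a b => (hFtx t).intervalIntegrable a b
  -- derivative of F x in t
  have hFder : ∀ x t : ℝ, HasDerivAt (fun s => F x s) (Ft x t) t := by
    intro x t
    have := ((tmv (f x)).hasFDerivAt (x := K x t)).comp_hasDerivAt t (hKder x t)
    exact this
  -- bound for Ft on [0,π] × ball 0 1
  obtain ⟨C, hC⟩ : ∃ C : ℝ, ∀ p ∈ (Set.uIcc (0:ℝ) Real.pi ×ˢ Set.Icc (-1:ℝ) 1),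
      ‖(fun p : ℝ × ℝ => Ft p.1 p.2) p‖ ≤ C := by
    obtain ⟨C, hC⟩ := (isCompact_uIcc.prod isCompact_Icc).exists_bound_of_continuousOn
      hFtcont.continuousOn
    exact ⟨C, hC⟩
  -- Step A: derivative of t ↦ ∫ x in 0..π, F x t at 0
  have hI : HasDerivAt (fun t => ∫ x in (0:ℝ)..Real.pi, F x t)
      (∫ x in (0:ℝ)..Real.pi, Ft x 0) 0 := by
    have := (intervalIntegral.hasDerivAt_integral_of_dominated_loc_of_deriv_le
      (F := fun t x => F x t) (F' := fun t x => Ft x t) (x₀ := (0:ℝ))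
      (a := 0) (b := Real.pi) (μ := volume) (bound := fun _ => C)
      (s := Metric.ball 0 1) (Metric.ball_mem_nhds _ one_pos)
      (Filter.Eventually.of_forall fun t => ((hFx t).aestronglyMeasurable))
      (hFint 0 0 Real.pi)
      ((hFtx 0).aestronglyMeasurable)
      ?_ (intervalIntegrable_const) ?_).2
    · exact this
    · refine Filter.Eventually.of_forall fun x hx => fun t ht => ?_
      refine hC (x, t) ⟨?_, ?_⟩
      · exact Set.uIoc_subset_uIcc hx
      · have := Metric.mem_ball.mp ht
        simp only [Real.dist_eq, sub_zero] at this
        constructor <;> [linarith [abs_le.mp this.le]; linarith [(abs_le.mp this.le).2]]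
    · exact Filter.Eventually.of_forall fun x _ t _ => hFder x t
  -- Step B: derivative of t ↦ ∫ x in 0..t, F x t at 0
  have hJ : HasDerivAt (fun t => ∫ x in (0:ℝ)..t, F x t) (F 0 0) 0 := by
    rw [hasDerivAt_iff_isLittleO, Asymptotics.isLittleO_iff]
    intro ε hε
    obtain ⟨δ, hδ, hδ'⟩ := Metric.continuousAt_iff.mp (hFcont.continuousAt
      (x := ((0:ℝ), (0:ℝ)))) ε hε
    filter_upwards [Metric.ball_mem_nhds (0:ℝ) hδ] with t ht
    have htδ : |t| < δ := by simpa [Real.dist_eq] using ht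
    have key : ∀ x ∈ Set.uIoc (0:ℝ) t, ‖F x t - F 0 0‖ ≤ ε := by
      intro x hx
      have hx1 : |x| ≤ |t| := by
        rcases hx with ⟨h1, h2⟩
        refine abs_le.mpr ⟨?_, ?_⟩
        · exact le_of_lt (lt_of_le_of_lt
            (le_min (neg_nonpos.mpr (abs_nonneg t)) (neg_abs_le t)) h1)
        · exact h2.trans (max_le (abs_nonneg t) (le_abs_self t))
      have hdist : dist ((x, t) : ℝ × ℝ) ((0:ℝ), (0:ℝ)) < δ := by
        rw [Prod.dist_eq]
        simp only [Real.dist_eq, sub_zero]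
        exact max_lt (lt_of_le_of_lt hx1 htδ) htδ
      have := hδ' hdist
      rw [dist_eq_norm] at this
      exact this.le
    have heq : (∫ x in (0:ℝ)..t, F x t) - (∫ x in (0:ℝ)..(0:ℝ), F x 0) - (t - 0) • F 0 0
        = ∫ x in (0:ℝ)..t, (F x t - F 0 0) := by
      rw [intervalIntegral.integral_sub (hFint t 0 t)
        (intervalIntegrable_const (c := F 0 0))]
      simp [intervalIntegral.integral_const]
    calc ‖(∫ x in (0:ℝ)..t, F x t) - (∫ x in (0:ℝ)..(0:ℝ), F x 0) - (t - 0) • F 0 0‖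
        = ‖∫ x in (0:ℝ)..t, (F x t - F 0 0)‖ := by rw [heq]
      _ ≤ ε * |t - 0| := intervalIntegral.norm_integral_le_of_norm_le_const key
      _ = ε * ‖t - 0‖ := by rw [Real.norm_eq_abs]
  -- rewrite g
  have hgt : ∀ᶠ t in nhds (0:ℝ), g t
      = f t + ((∫ x in (0:ℝ)..Real.pi, F x t) - ∫ x in (0:ℝ)..t, F x t) := by
    refine Filter.Eventually.of_forall fun t => ?_
    rw [hg t]
    congr 1
    rw [intervalIntegral.integral_interval_sub_left (hFint t 0 Real.pi) (hFint t 0 t)]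
  have hfd : HasDerivAt f (deriv f 0) 0 :=
    ((hfC.differentiable one_ne_zero) 0).hasDerivAt
  have hgd : HasDerivAt g (deriv f 0 + ((∫ x in (0:ℝ)..Real.pi, Ft x 0) - F 0 0)) 0 := by
    exact (hfd.add (hI.sub hJ)).congr_of_eventuallyEq hgt
  have hderiv : deriv g 0 = deriv f 0 + ((∫ x in (0:ℝ)..Real.pi, Ft x 0) - F 0 0) :=
    hgd.deriv
  -- vanishing of the integral term
  have h1 : B *ᵥ (∫ x in (0:ℝ)..Real.pi, Ft x 0) + A *ᵥ (∫ x in (0:ℝ)..Real.pi, F x 0) = 0 := by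
    have hB : B *ᵥ (∫ x in (0:ℝ)..Real.pi, Ft x 0) = ∫ x in (0:ℝ)..Real.pi, B *ᵥ Ft x 0 := by
      have := (mvc B).intervalIntegral_comp_comm (hFtint 0 0 Real.pi)
      simpa using this.symm
    have hA : A *ᵥ (∫ x in (0:ℝ)..Real.pi, F x 0) = ∫ x in (0:ℝ)..Real.pi, A *ᵥ F x 0 := by
      have := (mvc A).intervalIntegral_comp_comm (hFint 0 0 Real.pi)
      simpa using this.symm
    rw [hB, hA, ← intervalIntegral.integral_add
      (((continuous_const (y := B)).matrix_mulVec (hFtx 0)).intervalIntegrable 0 Real.pi)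
      (((continuous_const (y := A)).matrix_mulVec (hFx 0)).intervalIntegrable 0 Real.pi)]
    have : ∀ x ∈ Set.uIcc (0:ℝ) Real.pi, B *ᵥ Ft x 0 + A *ᵥ F x 0 = (0 : Fin N → ℝ) := by
      intro x hx
      have hx' : x ∈ Set.Icc (0:ℝ) Real.pi := by
        rwa [Set.uIcc_of_le Real.pi_pos.le] at hx
      have hbc := hKbc x hx'
      have hd : deriv (fun t => K x t) 0 = Kt x 0 := (hKder x 0).deriv
      rw [hd] at hbc
      have hbcT : A * (K x 0)ᵀ + B * (Kt x 0)ᵀ = 0 := by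
        have := congrArg Matrix.transpose hbc
        simpa [Matrix.transpose_add, Matrix.transpose_mul, add_comm] using this
      calc B *ᵥ Ft x 0 + A *ᵥ F x 0
          = (B * (Kt x 0)ᵀ + A * (K x 0)ᵀ) *ᵥ f x := by
            simp [hFt, hF, Matrix.mulVec_mulVec, Matrix.add_mulVec]
        _ = (0 : Matrix (Fin N) (Fin N) ℝ) *ᵥ f x := by
            rw [add_comm (B * (Kt x 0)ᵀ), hbcT]
        _ = 0 := Matrix.zero_mulVec _
    rw [intervalIntegral.integral_congr this]
    simp
  -- symmetric corner term
  have h2 : B *ᵥ F 0 0 = (B * K 0 0) *ᵥ f 0 := by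
    simp [hF, Matrix.mulVec_mulVec, hKsymm]
  have h3 : B *ᵥ deriv f 0 + A *ᵥ f 0 - (B * K 0 0) *ᵥ f 0 = 0 := by
    rw [hA', Matrix.sub_mulVec] at hfbc
    calc B *ᵥ deriv f 0 + A *ᵥ f 0 - (B * K 0 0) *ᵥ f 0
        = B *ᵥ deriv f 0 + (A *ᵥ f 0 - (B * K 0 0) *ᵥ f 0) := by abel
      _ = 0 := hfbc
  -- assemble
  have hg0 : g 0 = f 0 + ∫ x in (0:ℝ)..Real.pi, F x 0 := hg 0
  rw [hderiv, hg0]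
  rw [Matrix.mulVec_add, Matrix.mulVec_add, Matrix.mulVec_sub, h2]
  have : B *ᵥ deriv f 0 + (B *ᵥ (∫ x in (0:ℝ)..Real.pi, Ft x 0) - (B * K 0 0) *ᵥ f 0)
      + (A *ᵥ f 0 + A *ᵥ (∫ x in (0:ℝ)..Real.pi, F x 0))
      = (B *ᵥ deriv f 0 + A *ᵥ f 0 - (B * K 0 0) *ᵥ f 0)
      + (B *ᵥ (∫ x in (0:ℝ)..Real.pi, Ft x 0) + A *ᵥ (∫ x in (0:ℝ)..Real.pi, F x 0)) := by
    abel
  rw [this, h1, h3, add_zero]
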